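/- Let f, g : ℝ → ℝ be continuous and let F : {u ∈ ℝ : u ≠ 0} → ℝ be differentiable with F'(u) = f(u) − u⁻²·g(1/u) for every u ≠ 0. On the open set U = {(x, y, vx, vy) ∈ ℝ⁴ : x ≠ 0 and y ≠ 0} define the function I(x, y, vx, vy) = (1/2)·(x·vy − y·vx)² + F(x/y) and the vector fields X1(x, y, vx, vy) = (vx, vy, g(y/x)/(x²·y), f(x/y)/(x·y²)), X2(x, y, vx, vy) = (1/2)·(x, y, −vx, −vy), X3(x, y, vx, vy) = (0, 0, −x, −y), where the four components correspond to the coordinates (x, y, vx, vy). Then I is a common first integral of X1, X2 and X3, i.e. for every p ∈ U and each i ∈ {1, 2, 3} the directional derivative of I at p in the direction Xi(p) vanishes: (DI(p))(Xi(p)) = 0. -/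

import Mathlib

/-- On `U = {(x, y, vx, vy) : x ≠ 0 ∧ y ≠ 0} ⊆ ℝ⁴`, the function
`I = (1/2)(x·vy − y·vx)² + F(x/y)` is a common first integral of the vector
fields `X1, X2, X3` of the Vessiot--Guldberg Lie algebra of the generalized
Ermakov system. -/
theorem ermakov_common_first_integral
    (f g : ℝ → ℝ) (F : ℝ → ℝ)
    (hf : Continuous f) (hg : Continuous g)
    (hF : ∀ u : ℝ, u ≠ 0 → HasDerivAt F (f u - (u⁻¹) ^ 2 * g (1 / u)) u) :
    let I : ℝ × ℝ × ℝ × ℝ → ℝ := fun p =>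
      (1 / 2) * (p.1 * p.2.2.2 - p.2.1 * p.2.2.1) ^ 2 + F (p.1 / p.2.1)
    let X1 : ℝ × ℝ × ℝ × ℝ → ℝ × ℝ × ℝ × ℝ := fun p =>
      (p.2.2.1, p.2.2.2, g (p.2.1 / p.1) / (p.1 ^ 2 * p.2.1),
        f (p.1 / p.2.1) / (p.1 * p.2.1 ^ 2))
    let X2 : ℝ × ℝ × ℝ × ℝ → ℝ × ℝ × ℝ × ℝ := fun p =>
      (1 / 2 : ℝ) • (p.1, p.2.1, -p.2.2.1, -p.2.2.2)
    let X3 : ℝ × ℝ × ℝ × ℝ → ℝ × ℝ × ℝ × ℝ := fun p => (0, 0, -p.1, -p.2.1)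
    ∀ p : ℝ × ℝ × ℝ × ℝ, p.1 ≠ 0 → p.2.1 ≠ 0 →
      fderiv ℝ I p (X1 p) = 0 ∧ fderiv ℝ I p (X2 p) = 0 ∧
        fderiv ℝ I p (X3 p) = 0 := by
  intro I X1 X2 X3 p hx hy
  obtain ⟨x, y, vx, vy⟩ := p
  simp only at hx hy
  set p : ℝ × ℝ × ℝ × ℝ := (x, y, vx, vy) with hp
  have h1 : HasFDerivAt (fun q : ℝ × ℝ × ℝ × ℝ => q.1)
      (ContinuousLinearMap.fst ℝ ℝ (ℝ × ℝ × ℝ)) p := hasFDerivAt_fst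
  have h2 : HasFDerivAt (fun q : ℝ × ℝ × ℝ × ℝ => q.2.1)
      ((ContinuousLinearMap.fst ℝ ℝ (ℝ × ℝ)).comp (ContinuousLinearMap.snd ℝ ℝ (ℝ × ℝ × ℝ))) p :=
    hasFDerivAt_fst.comp p hasFDerivAt_snd
  have h3 : HasFDerivAt (fun q : ℝ × ℝ × ℝ × ℝ => q.2.2.1)
      ((ContinuousLinearMap.fst ℝ ℝ ℝ).comp ((ContinuousLinearMap.snd ℝ ℝ (ℝ × ℝ)).comp (ContinuousLinearMap.snd ℝ ℝ (ℝ × ℝ × ℝ)))) p :=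
    hasFDerivAt_fst.comp p (hasFDerivAt_snd.comp p hasFDerivAt_snd)
  have h4 : HasFDerivAt (fun q : ℝ × ℝ × ℝ × ℝ => q.2.2.2)
      ((ContinuousLinearMap.snd ℝ ℝ ℝ).comp ((ContinuousLinearMap.snd ℝ ℝ (ℝ × ℝ)).comp (ContinuousLinearMap.snd ℝ ℝ (ℝ × ℝ × ℝ)))) p :=
    hasFDerivAt_snd.comp p (hasFDerivAt_snd.comp p hasFDerivAt_snd)
  have hu : x * y⁻¹ ≠ 0 := mul_ne_zero hx (inv_ne_zero hy)
  have hinv : HasFDerivAt (fun q : ℝ × ℝ × ℝ × ℝ => (q.2.1)⁻¹)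
      ((-(y^2)⁻¹) • ((ContinuousLinearMap.fst ℝ ℝ (ℝ × ℝ)).comp (ContinuousLinearMap.snd ℝ ℝ (ℝ × ℝ × ℝ)))) p :=
    (hasDerivAt_inv hy).comp_hasFDerivAt p h2
  have hQ := h1.mul hinv
  have hA := (h1.mul h4).sub (h2.mul h3)
  have hI := ((hA.mul hA).const_mul (1/2:ℝ)).add
      ((hF _ hu).comp_hasFDerivAt p hQ)
  have heq : I = (fun q : ℝ × ℝ × ℝ × ℝ =>
      (1 / 2) * ((q.1 * q.2.2.2 - q.2.1 * q.2.2.1) * (q.1 * q.2.2.2 - q.2.1 * q.2.2.1))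
        + (F ∘ fun q : ℝ × ℝ × ℝ × ℝ => q.1 * (q.2.1)⁻¹) q) := by
    funext q
    simp only [I, Function.comp]
    rw [pow_two, div_eq_mul_inv q.1 q.2.1]
  refine ⟨?_, ?_, ?_⟩ <;>
  · erw [heq, hI.fderiv]
    simp only [X1, X2, X3, ContinuousLinearMap.add_apply, ContinuousLinearMap.sub_apply,
      ContinuousLinearMap.smul_apply, ContinuousLinearMap.comp_apply,
      ContinuousLinearMap.coe_fst', ContinuousLinearMap.coe_snd', ContinuousLinearMap.neg_apply,
      smul_eq_mul, Prod.smul_mk, Prod.fst, Prod.snd, Pi.mul_apply, Pi.sub_apply, hp]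
    rw [show (1:ℝ)/(x*y⁻¹) = y/x by field_simp,
      show x*y⁻¹ = x/y from (div_eq_mul_inv x y).symm]
    field_simp
    ring
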